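/- Let a₁,…,a_n ∈ ℂ be distinct. If (x₁,…,x_n) ∈ ℂⁿ satisfies x_k² = Σ_{j≠k} (x_j − x_k)/(a_j − a_k) for every k = 1,…,n, then there exists an integer s with 1 ≤ s ≤ n+1 and n+s odd such that (n+1)² − 4·Σ_{k=1}^n x_k·a_k = s² (an identity in ℂ). -/

import Mathlib

open Polynomial Finset

namespace BetheAux

variable {n : ℕ} (a : Fin n → ℂ)

/-- derivative of a product of linear factors -/
lemma deriv_prod_lin (s : Finset (Fin n)) :
    derivative (∏ j ∈ s, (X - C (a j))) = ∑ j ∈ s, ∏ i ∈ s.erase j, (X - C (a i)) := by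
  classical
  induction s using Finset.induction_on with
  | empty => simp
  | @insert k s hk ih =>
    rw [Finset.prod_insert hk, derivative_mul, ih, Finset.sum_insert hk,
      Finset.erase_insert hk, Finset.mul_sum]
    simp only [derivative_sub, derivative_X, derivative_C, sub_zero, one_mul]
    congr 1
    apply Finset.sum_congr rfl
    intro j hj
    rw [Finset.erase_insert_of_ne (by rintro rfl; exact hk hj),
      Finset.prod_insert (by simp [hk])]

noncomputable def Ak (k : Fin n) : ℂ[X] := ∏ j ∈ univ.erase k, (X - C (a j))
noncomputable def Apoly : ℂ[X] := ∏ j, (X - C (a j))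
noncomputable def Bpoly (x : Fin n → ℂ) : ℂ[X] := ∑ k, C (x k) * Ak a k

noncomputable def pk (k : Fin n) : ℂ := ∏ j ∈ univ.erase k, (a k - a j)
noncomputable def pkl (k l : Fin n) : ℂ := ∏ j ∈ (univ.erase k).erase l, (a k - a j)

lemma pk_ne_zero (ha : Function.Injective a) (k : Fin n) : pk a k ≠ 0 := by
  apply Finset.prod_ne_zero_iff.2
  intro j hj
  simp only [Finset.mem_erase] at hj
  exact sub_ne_zero.2 fun h => hj.1 (ha h).symm

lemma eval_Ak_self (k : Fin n) : eval (a k) (Ak a k) = pk a k := by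
  simp [Ak, pk, eval_prod]

lemma eval_Ak_ne {k l : Fin n} (h : l ≠ k) : eval (a k) (Ak a l) = 0 := by
  rw [Ak, eval_prod]
  apply Finset.prod_eq_zero (Finset.mem_erase.2 ⟨fun hh => h hh.symm, Finset.mem_univ k⟩)
  simp

lemma eval_Apoly (k : Fin n) : eval (a k) (Apoly a) = 0 := by
  rw [Apoly, eval_prod]
  apply Finset.prod_eq_zero (Finset.mem_univ k)
  simp

lemma deriv_Apoly : derivative (Apoly a) = ∑ l, Ak a l := by
  rw [Apoly, deriv_prod_lin]; rfl

lemma eval_deriv_Apoly (k : Fin n) : eval (a k) (derivative (Apoly a)) = pk a k := by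
  rw [deriv_Apoly, eval_finset_sum]
  rw [Finset.sum_eq_single k]
  · exact eval_Ak_self a k
  · intro l _ hl; exact eval_Ak_ne a hl
  · simp

lemma deriv_Ak (l : Fin n) :
    derivative (Ak a l) = ∑ j ∈ univ.erase l, ∏ i ∈ (univ.erase l).erase j, (X - C (a i)) := by
  rw [Ak, deriv_prod_lin]

lemma eval_deriv_Ak_self (k : Fin n) :
    eval (a k) (derivative (Ak a k)) = ∑ j ∈ univ.erase k, pkl a k j := by
  rw [deriv_Ak, eval_finset_sum]
  apply Finset.sum_congr rfl
  intro j hj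
  rw [eval_prod]
  simp [pkl]

lemma eval_deriv_Ak_ne {k l : Fin n} (h : l ≠ k) :
    eval (a k) (derivative (Ak a l)) = pkl a k l := by
  rw [deriv_Ak, eval_finset_sum]
  rw [Finset.sum_eq_single k]
  · rw [eval_prod, Finset.erase_right_comm]
    simp [pkl]
  · intro j hj hjk
    rw [eval_prod]
    apply Finset.prod_eq_zero (i := k)
    · simp only [Finset.mem_erase]
      exact ⟨fun hh => hjk hh.symm, fun hh => h hh.symm, Finset.mem_univ k⟩
    · simp
  · intro hk; exact absurd (Finset.mem_erase.2 ⟨fun hh => h hh.symm, Finset.mem_univ k⟩) hk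

lemma eval_dderiv_Apoly (k : Fin n) :
    eval (a k) (derivative (derivative (Apoly a))) = 2 * ∑ l ∈ univ.erase k, pkl a k l := by
  rw [deriv_Apoly, derivative_sum, eval_finset_sum]
  rw [← Finset.add_sum_erase _ _ (Finset.mem_univ k)]
  rw [eval_deriv_Ak_self]
  have : ∀ l ∈ univ.erase k, eval (a k) (derivative (Ak a l)) = pkl a k l := by
    intro l hl
    exact eval_deriv_Ak_ne a (Finset.mem_erase.1 hl).1
  rw [Finset.sum_congr rfl this]
  ring

variable (x : Fin n → ℂ)

lemma eval_Bpoly (k : Fin n) : eval (a k) (Bpoly a x) = x k * pk a k := by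
  rw [Bpoly, eval_finset_sum]
  rw [Finset.sum_eq_single k]
  · rw [eval_mul, eval_C, eval_Ak_self]
  · intro l _ hl; rw [eval_mul, eval_C, eval_Ak_ne a hl, mul_zero]
  · simp

lemma eval_deriv_Bpoly (k : Fin n) :
    eval (a k) (derivative (Bpoly a x)) =
      x k * (∑ j ∈ univ.erase k, pkl a k j) + ∑ l ∈ univ.erase k, x l * pkl a k l := by
  rw [Bpoly, derivative_sum]
  simp only [derivative_C_mul]
  rw [eval_finset_sum]
  simp only [eval_mul, eval_C]
  rw [← Finset.add_sum_erase _ _ (Finset.mem_univ k)]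
  rw [eval_deriv_Ak_self]
  congr 1
  apply Finset.sum_congr rfl
  intro l hl
  rw [eval_deriv_Ak_ne a (Finset.mem_erase.1 hl).1]


/-- the key consequence of the Bethe system : `B² + A'B' - A''B` vanishes at each `a k`. -/
lemma keyC (ha : Function.Injective a)
    (hx : ∀ k, (x k) ^ 2 = ∑ j ∈ Finset.univ.erase k, (x j - x k) / (a j - a k)) (k : Fin n) :
    (eval (a k) (Bpoly a x)) ^ 2
      + eval (a k) (derivative (Apoly a)) * eval (a k) (derivative (Bpoly a x))
      - eval (a k) (derivative (derivative (Apoly a))) * eval (a k) (Bpoly a x) = 0 := by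
  rw [eval_Bpoly, eval_deriv_Apoly, eval_deriv_Bpoly, eval_dderiv_Apoly]
  have hsum : ∑ l ∈ univ.erase k, (x l - x k) * pkl a k l = - pk a k * (x k)^2 := by
    rw [hx k, Finset.mul_sum]
    apply Finset.sum_congr rfl
    intro l hl
    have hlk : l ≠ k := (Finset.mem_erase.1 hl).1
    have hne : a l - a k ≠ 0 := sub_ne_zero.2 fun h => hlk (ha h)
    have hfac : pk a k = (a k - a l) * pkl a k l :=
      (Finset.mul_prod_erase _ (fun j => a k - a j) hl).symm
    rw [hfac]
    field_simp
    ring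
  have expand : ∑ l ∈ univ.erase k, (x l - x k) * pkl a k l
      = (∑ l ∈ univ.erase k, x l * pkl a k l) - x k * ∑ l ∈ univ.erase k, pkl a k l := by
    rw [Finset.mul_sum, ← Finset.sum_sub_distrib]
    apply Finset.sum_congr rfl
    intro l _
    ring
  have h := hsum
  rw [expand] at h
  -- now pure algebra
  linear_combination pk a k * h

/-- The differential operator `y ↦ A y'' - A' y' + B y` as a linear map. -/
noncomputable def Lop : ℂ[X] →ₗ[ℂ] ℂ[X] :=
  (LinearMap.mulLeft ℂ (Apoly a)) ∘ₗ (derivative ∘ₗ derivative)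
    - (LinearMap.mulLeft ℂ (derivative (Apoly a))) ∘ₗ derivative
    + LinearMap.mulLeft ℂ (Bpoly a x)

lemma Lop_apply (y : ℂ[X]) :
    Lop a x y = Apoly a * derivative (derivative y)
      - derivative (Apoly a) * derivative y + Bpoly a x * y := rfl

/-- The functional `g ↦ (B(aₖ) - A''(aₖ)) g(aₖ) + A'(aₖ) g'(aₖ)`. -/
noncomputable def lam (k : Fin n) : ℂ[X] →ₗ[ℂ] ℂ :=
  (eval (a k) (Bpoly a x) - eval (a k) (derivative (derivative (Apoly a)))) • leval (a k)
    + (eval (a k) (derivative (Apoly a))) • ((leval (a k)) ∘ₗ (derivative : ℂ[X] →ₗ[ℂ] ℂ[X]))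

lemma lam_apply (k : Fin n) (g : ℂ[X]) :
    lam a x k g = (eval (a k) (Bpoly a x) - eval (a k) (derivative (derivative (Apoly a))))
        * eval (a k) g + eval (a k) (derivative (Apoly a)) * eval (a k) (derivative g) := by
  simp [lam, leval]

lemma lam_Lop (ha : Function.Injective a)
    (hx : ∀ k, (x k) ^ 2 = ∑ j ∈ Finset.univ.erase k, (x j - x k) / (a j - a k))
    (k : Fin n) (y : ℂ[X]) : lam a x k (Lop a x y) = 0 := by
  have hC := keyC a x ha hx k
  rw [lam_apply, Lop_apply]
  have hder : derivative (Apoly a * derivative (derivative y)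
      - derivative (Apoly a) * derivative y + Bpoly a x * y)
      = Apoly a * derivative (derivative (derivative y))
        - derivative (derivative (Apoly a)) * derivative y
        + derivative (Bpoly a x) * y + Bpoly a x * derivative y := by
    simp only [derivative_add, derivative_sub, derivative_mul]
    ring
  rw [hder]
  simp only [eval_add, eval_sub, eval_mul, eval_Apoly]
  linear_combination eval (a k) y * hC

lemma monic_Ak (k : Fin n) : Monic (Ak a k) :=
  monic_prod_of_monic _ _ (fun i _ => monic_X_sub_C (a i))

lemma natDegree_Ak (k : Fin n) : natDegree (Ak a k) = n - 1 := by
  rw [Ak, natDegree_prod]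
  · simp [Finset.card_erase_of_mem]
  · intro i _; exact X_sub_C_ne_zero (a i)

lemma monic_Apoly : Monic (Apoly a) :=
  monic_prod_of_monic _ _ (fun i _ => monic_X_sub_C (a i))

lemma natDegree_Apoly : natDegree (Apoly a) = n := by
  rw [Apoly, natDegree_prod]
  · simp
  · intro i _; exact X_sub_C_ne_zero (a i)

lemma natDegree_Bpoly_le : natDegree (Bpoly a x) ≤ n - 1 := by
  apply natDegree_sum_le_of_forall_le
  intro k _
  exact (natDegree_C_mul_le _ _).trans (le_of_eq (natDegree_Ak a k))

lemma coeffB_top : coeff (Bpoly a x) (n - 1) = ∑ k, x k := by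
  rw [Bpoly, finset_sum_coeff]
  apply Finset.sum_congr rfl
  intro k _
  rw [coeff_C_mul]
  have : coeff (Ak a k) (n - 1) = 1 := by
    have h1 := monic_Ak a k
    have h2 := natDegree_Ak a k
    rw [← h2]
    exact h1.coeff_natDegree
  rw [this, mul_one]

lemma coeffB_next (hn : 2 ≤ n) :
    coeff (Bpoly a x) (n - 2) = (∑ k, x k * a k) - (∑ j, a j) * ∑ k, x k := by
  rw [Bpoly, finset_sum_coeff]
  have key : ∀ k, coeff (Ak a k) (n - 2) = a k - ∑ j, a j := by
    intro k
    have h2 := natDegree_Ak a k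
    have hpos : 0 < natDegree (Ak a k) := by omega
    have this1 := nextCoeff_of_natDegree_pos (p := Ak a k) hpos
    have h3 : nextCoeff (Ak a k) = -∑ i ∈ univ.erase k, a i := by
      rw [Ak]; exact prod_X_sub_C_nextCoeff a
    have hsum : ∑ i ∈ univ.erase k, a i = (∑ j, a j) - a k := by
      rw [← Finset.add_sum_erase _ _ (Finset.mem_univ k)]; ring
    have hnn : n - 1 - 1 = n - 2 := by omega
    rw [h2, hnn, h3] at this1
    rw [← this1, hsum]
    ring
  rw [Finset.sum_congr rfl (fun k _ => by rw [coeff_C_mul, key k])]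
  rw [Finset.sum_congr rfl (fun k (_ : k ∈ univ) => (mul_sub (x k) (a k) (∑ j, a j)))]
  rw [Finset.sum_sub_distrib, ← Finset.sum_mul]
  ring

lemma d_zero {f : ℂ[X]} (h : natDegree f ≤ 0) : derivative f = 0 := by
  rw [eq_C_of_natDegree_le_zero h, derivative_C]

lemma dd_zero {f : ℂ[X]} (h : natDegree f ≤ 1) : derivative (derivative f) = 0 := by
  apply d_zero
  have := natDegree_derivative_le f
  omega

lemma coeff_L_high (hn : 1 ≤ n) (f : ℂ[X]) {d : ℕ} (hf : natDegree f ≤ d) :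
    coeff (Lop a x f) (n - 1 + d) = coeff (Bpoly a x) (n - 1) * coeff f d := by
  rw [Lop_apply, coeff_add, coeff_sub]
  have h1 : coeff (Apoly a * derivative (derivative f)) (n - 1 + d) = 0 := by
    by_cases hd : d ≤ 1
    · rw [dd_zero (hf.trans hd), mul_zero, coeff_zero]
    · apply coeff_eq_zero_of_natDegree_lt
      have hb : natDegree (derivative (derivative f)) ≤ d - 2 := by
        have u1 := natDegree_derivative_le f
        have u2 := natDegree_derivative_le (derivative f)
        omega
      calc natDegree (Apoly a * derivative (derivative f))
          ≤ natDegree (Apoly a) + natDegree (derivative (derivative f)) := natDegree_mul_le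
        _ ≤ n + (d - 2) := add_le_add (le_of_eq (natDegree_Apoly a)) hb
        _ < n - 1 + d := by omega
  have h2 : coeff (derivative (Apoly a) * derivative f) (n - 1 + d) = 0 := by
    by_cases hd : d = 0
    · rw [d_zero (by omega : natDegree f ≤ 0), mul_zero, coeff_zero]
    · apply coeff_eq_zero_of_natDegree_lt
      have hb : natDegree (derivative f) ≤ d - 1 := by
        have := natDegree_derivative_le f; omega
      have ha' : natDegree (derivative (Apoly a)) ≤ n - 1 := by
        have := natDegree_derivative_le (Apoly a); rw [natDegree_Apoly a] at this; exact this
      calc natDegree (derivative (Apoly a) * derivative f)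
          ≤ natDegree (derivative (Apoly a)) + natDegree (derivative f) := natDegree_mul_le
        _ ≤ (n - 1) + (d - 1) := add_le_add ha' hb
        _ < n - 1 + d := by omega
  rw [h1, h2, coeff_mul_add_eq_of_natDegree_le (natDegree_Bpoly_le a x) hf]
  ring

lemma coeff_L_second (hn : 2 ≤ n) (f : ℂ[X]) {d : ℕ} (hf : natDegree f ≤ d)
    (hB : natDegree (Bpoly a x) ≤ n - 2) :
    coeff (Lop a x f) (n - 2 + d)
      = ((d : ℂ) * (d - 1) - n * d + coeff (Bpoly a x) (n - 2)) * coeff f d := by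
  rw [Lop_apply, coeff_add, coeff_sub]
  have h1 : coeff (Apoly a * derivative (derivative f)) (n - 2 + d)
      = (d : ℂ) * ((d : ℂ) - 1) * coeff f d := by
    by_cases hd : d ≤ 1
    · rw [dd_zero (hf.trans hd), mul_zero, coeff_zero]
      interval_cases d <;> simp
    · push_neg at hd
      have hidx : n - 2 + d = n + (d - 2) := by omega
      have hb : natDegree (derivative (derivative f)) ≤ d - 2 := by
        have u1 := natDegree_derivative_le f
        have u2 := natDegree_derivative_le (derivative f)
        omega
      rw [hidx, coeff_mul_add_eq_of_natDegree_le (le_of_eq (natDegree_Apoly a)) hb]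
      have hA : coeff (Apoly a) n = 1 := by
        have := (monic_Apoly a).coeff_natDegree
        rwa [natDegree_Apoly a] at this
      rw [hA, one_mul]
      rw [coeff_derivative, coeff_derivative]
      have e1 : d - 2 + 1 = d - 1 := by omega
      have e2 : d - 1 + 1 = d := by omega
      rw [e1, e2]
      have c1 : ((d - 1 : ℕ) : ℂ) = (d : ℂ) - 1 := by
        push_cast [Nat.cast_sub (by omega : 1 ≤ d)]; ring
      have c2 : ((d - 2 : ℕ) : ℂ) + 1 = (d : ℂ) - 1 := by
        push_cast [Nat.cast_sub (by omega : 2 ≤ d)]; ring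
      rw [c2, c1]
      ring
  have h2 : coeff (derivative (Apoly a) * derivative f) (n - 2 + d)
      = (n : ℂ) * d * coeff f d := by
    by_cases hd : d = 0
    · rw [d_zero (by omega : natDegree f ≤ 0), mul_zero, coeff_zero, hd]
      push_cast; ring
    · have hidx : n - 2 + d = (n - 1) + (d - 1) := by omega
      have hb : natDegree (derivative f) ≤ d - 1 := by
        have := natDegree_derivative_le f; omega
      have ha' : natDegree (derivative (Apoly a)) ≤ n - 1 := by
        have := natDegree_derivative_le (Apoly a); rw [natDegree_Apoly a] at this; exact this
      rw [hidx, coeff_mul_add_eq_of_natDegree_le ha' hb]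
      rw [coeff_derivative, coeff_derivative]
      have e1 : n - 1 + 1 = n := by omega
      have e2 : d - 1 + 1 = d := by omega
      rw [e1, e2]
      have hA : coeff (Apoly a) n = 1 := by
        have := (monic_Apoly a).coeff_natDegree
        rwa [natDegree_Apoly a] at this
      rw [hA, one_mul]
      have c1 : ((n - 1 : ℕ) : ℂ) + 1 = (n : ℂ) := by
        push_cast [Nat.cast_sub (by omega : 1 ≤ n)]; ring
      have c2 : ((d - 1 : ℕ) : ℂ) + 1 = (d : ℂ) := by
        push_cast [Nat.cast_sub (by omega : 1 ≤ d)]; ring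
      rw [c1, c2]
      ring
  rw [h1, h2, coeff_mul_add_eq_of_natDegree_le hB hf]
  ring

-- membership helpers for degreeLT
lemma mem_degreeLT_of_natDegree_lt {f : ℂ[X]} {m : ℕ} (h : natDegree f < m) :
    f ∈ degreeLT ℂ m := by
  rw [Polynomial.mem_degreeLT]
  calc degree f ≤ (natDegree f : WithBot ℕ) := degree_le_natDegree
    _ < (m : WithBot ℕ) := by exact_mod_cast h

lemma natDegree_le_of_mem_degreeLT {f : ℂ[X]} {m : ℕ} (hm : 1 ≤ m)
    (h : f ∈ degreeLT ℂ m) : natDegree f ≤ m - 1 := by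
  by_cases hf : f = 0
  · simp [hf]
  · rw [Polynomial.mem_degreeLT] at h
    have := (natDegree_lt_iff_degree_lt hf).2 h
    omega

lemma eval_Ak_root {j k : Fin n} (h : j ≠ k) : eval (a j) (Ak a k) = 0 := by
  rw [Ak, eval_prod]
  apply Finset.prod_eq_zero (Finset.mem_erase.2 ⟨h, Finset.mem_univ j⟩)
  simp

noncomputable def rk (k : Fin n) : ℂ[X] := (X - C (a k)) * (Ak a k * Ak a k)

lemma eval_rk (j k : Fin n) : eval (a j) (rk a k) = 0 := by
  by_cases h : j = k
  · subst h; simp [rk]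
  · simp [rk, eval_Ak_root a h]

lemma eval_deriv_rk_ne {j k : Fin n} (h : j ≠ k) : eval (a j) (derivative (rk a k)) = 0 := by
  rw [rk, derivative_mul, derivative_mul]
  simp [eval_Ak_root a h]

lemma eval_deriv_rk_self (k : Fin n) :
    eval (a k) (derivative (rk a k)) = pk a k * pk a k := by
  rw [rk, derivative_mul, derivative_mul]
  simp [eval_Ak_self]

lemma lam_rk (j k : Fin n) :
    lam a x j (rk a k) = if j = k then pk a k * pk a k * pk a k else 0 := by
  rw [lam_apply, eval_rk, mul_zero, zero_add]
  by_cases h : j = k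
  · subst h
    rw [eval_deriv_rk_self, eval_deriv_Apoly, if_pos rfl]
    ring
  · rw [eval_deriv_rk_ne a h, mul_zero, if_neg h]

lemma rk_mem (hn : 1 ≤ n) (k : Fin n) : rk a k ∈ degreeLT ℂ (2 * n) := by
  apply mem_degreeLT_of_natDegree_lt
  calc natDegree (rk a k) ≤ natDegree (X - C (a k)) + natDegree (Ak a k * Ak a k) :=
        natDegree_mul_le
    _ ≤ 1 + ((n-1) + (n-1)) := by
        apply add_le_add (le_of_eq (natDegree_X_sub_C _))
        exact natDegree_mul_le.trans (add_le_add (le_of_eq (natDegree_Ak a k))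
          (le_of_eq (natDegree_Ak a k)))
    _ < 2 * n := by omega

lemma natDegree_L_le {f : ℂ[X]} {m c N : ℕ} (hf : natDegree f ≤ m)
    (hB : natDegree (Bpoly a x) ≤ c)
    (h1 : n + (m - 2) ≤ N) (h2 : (n - 1) + (m - 1) ≤ N) (h3 : c + m ≤ N) :
    natDegree (Lop a x f) ≤ N := by
  rw [Lop_apply]
  apply (natDegree_add_le _ _).trans
  apply max_le
  · apply (natDegree_sub_le _ _).trans
    apply max_le
    · apply natDegree_mul_le.trans
      have hdd : natDegree (derivative (derivative f)) ≤ m - 2 := by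
        have u1 := natDegree_derivative_le f
        have u2 := natDegree_derivative_le (derivative f)
        omega
      exact le_trans (add_le_add (le_of_eq (natDegree_Apoly a)) hdd) h1
    · apply natDegree_mul_le.trans
      have hd : natDegree (derivative f) ≤ m - 1 := by
        have := natDegree_derivative_le f; omega
      have hA : natDegree (derivative (Apoly a)) ≤ n - 1 := by
        have := natDegree_derivative_le (Apoly a); rw [natDegree_Apoly a] at this; exact this
      exact le_trans (add_le_add hA hd) h2
  · exact natDegree_mul_le.trans (le_trans (add_le_add hB hf) h3)

lemma finrank_degreeLT (m : ℕ) : Module.finrank ℂ (degreeLT ℂ m) = m := by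
  rw [LinearEquiv.finrank_eq (degreeLTEquiv ℂ m)]
  exact Module.finrank_fin_fun ℂ

lemma kernel_submodule (ha : Function.Injective a)
    (hx : ∀ k, (x k) ^ 2 = ∑ j ∈ Finset.univ.erase k, (x j - x k) / (a j - a k))
    (hn : 1 ≤ n) {m : ℕ} (hm : 1 ≤ m)
    (himg : ∀ f : ℂ[X], natDegree f ≤ m - 1 → natDegree (Lop a x f) < 2 * n) :
    ∃ P : Submodule ℂ ℂ[X], (∀ p ∈ P, Lop a x p = 0) ∧ FiniteDimensional ℂ P ∧
      m - n ≤ Module.finrank ℂ P := by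
  classical
  set E := Polynomial.degreeLTEquiv ℂ (2 * n) with hE
  set Em := Polynomial.degreeLTEquiv ℂ m with hEm
  set Λc : (Fin (2 * n) → ℂ) →ₗ[ℂ] (Fin n → ℂ) :=
    (LinearMap.pi (lam a x)) ∘ₗ ((degreeLT ℂ (2 * n)).subtype ∘ₗ (E.symm : _ ≃ₗ[ℂ] _).toLinearMap)
    with hΛc
  have hmemW : ∀ y : degreeLT ℂ m, Lop a x (y : ℂ[X]) ∈ degreeLT ℂ (2 * n) := fun y =>
    mem_degreeLT_of_natDegree_lt (himg _ (natDegree_le_of_mem_degreeLT hm y.2))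
  set Lc : (Fin m → ℂ) →ₗ[ℂ] (Fin (2 * n) → ℂ) :=
    (E.toLinearMap ∘ₗ LinearMap.codRestrict (degreeLT ℂ (2 * n))
      ((Lop a x) ∘ₗ (degreeLT ℂ m).subtype) hmemW) ∘ₗ (Em.symm : _ ≃ₗ[ℂ] _).toLinearMap
    with hLc
  have hLc_apply : ∀ v : Fin m → ℂ, Lc v
      = E ⟨Lop a x ((Em.symm v : degreeLT ℂ m) : ℂ[X]), hmemW _⟩ := fun v => rfl
  have hcomp : ∀ v, Λc (Lc v) = 0 := by
    intro v
    rw [hLc_apply]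
    funext k
    show lam a x k (((E.symm (E _) : degreeLT ℂ (2*n)) : ℂ[X])) = 0
    rw [LinearEquiv.symm_apply_apply]
    exact lam_Lop a x ha hx k _
  have hsurj : Function.Surjective Λc := by
    intro c
    have hmem : (∑ k, (c k / (pk a k * pk a k * pk a k)) • rk a k) ∈ degreeLT ℂ (2 * n) :=
      Submodule.sum_mem _ (fun k _ => Submodule.smul_mem _ _ (rk_mem a hn k))
    refine ⟨E ⟨_, hmem⟩, ?_⟩
    funext j
    show lam a x j (((E.symm (E _) : degreeLT ℂ (2*n)) : ℂ[X])) = c j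
    rw [LinearEquiv.symm_apply_apply]
    show lam a x j (∑ k, (c k / (pk a k * pk a k * pk a k)) • rk a k) = c j
    rw [map_sum]
    simp only [map_smul, smul_eq_mul, lam_rk]
    simp only [mul_ite, mul_zero]
    rw [Finset.sum_ite_eq univ j
      (fun k => c k / (pk a k * pk a k * pk a k) * (pk a k * pk a k * pk a k))]
    rw [if_pos (Finset.mem_univ j)]
    have hp := pk_ne_zero a ha j
    field_simp
  have hrange : LinearMap.range Λc = ⊤ := LinearMap.range_eq_top.2 hsurj
  have hkerdim : Module.finrank ℂ (LinearMap.ker Λc) = n := by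
    have h0 := LinearMap.finrank_range_add_finrank_ker (K := ℂ) (V := Fin (2*n) → ℂ)
      (V₂ := Fin n → ℂ) Λc
    rw [hrange, finrank_top, Module.finrank_fin_fun, Module.finrank_fin_fun] at h0
    omega
  have hΦmem : ∀ v, Lc v ∈ LinearMap.ker Λc := fun v => LinearMap.mem_ker.2 (hcomp v)
  set Φ : (Fin m → ℂ) →ₗ[ℂ] LinearMap.ker Λc := LinearMap.codRestrict _ Lc hΦmem with hΦ
  have h1 := LinearMap.finrank_range_add_finrank_ker (K := ℂ) (V := Fin m → ℂ)
    (V₂ := LinearMap.ker Λc) Φ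
  rw [Module.finrank_fin_fun] at h1
  have h3 : Module.finrank ℂ (LinearMap.range Φ) ≤ n :=
    le_of_le_of_eq (Submodule.finrank_le _) hkerdim
  have hkerΦ : m - n ≤ Module.finrank ℂ (LinearMap.ker Φ) := by omega
  -- transport the kernel into ℂ[X]
  set ι : (Fin m → ℂ) →ₗ[ℂ] ℂ[X] :=
    (degreeLT ℂ m).subtype ∘ₗ (Em.symm : _ ≃ₗ[ℂ] _).toLinearMap with hι
  have hιinj : Function.Injective ι := by
    apply Function.Injective.comp (Submodule.injective_subtype _)
    exact Em.symm.injective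
  refine ⟨Submodule.map ι (LinearMap.ker Φ), ?_, ?_, ?_⟩
  · rintro p ⟨u, hu, rfl⟩
    have hΦu : Φ u = 0 := LinearMap.mem_ker.1 hu
    have hLcu : Lc u = 0 := congrArg Subtype.val hΦu
    rw [hLc_apply] at hLcu
    have h5 : (⟨Lop a x ((Em.symm u : degreeLT ℂ m) : ℂ[X]), hmemW _⟩ : degreeLT ℂ (2*n)) = 0 := by
      apply E.injective
      rw [hLcu]
      simp
    exact congrArg Subtype.val h5
  · exact Module.Finite.map _ _
  · rw [← LinearEquiv.finrank_eq (Submodule.equivMapOfInjective ι hιinj (LinearMap.ker Φ))]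
    exact hkerΦ

lemma exists_two_degrees (P : Submodule ℂ ℂ[X]) [FiniteDimensional ℂ P]
    (h : 2 ≤ Module.finrank ℂ P) :
    ∃ f ∈ P, ∃ g ∈ P, f ≠ 0 ∧ g ≠ 0 ∧ natDegree f ≠ natDegree g := by
  have h0 : Nontrivial P := (Module.finrank_pos_iff (R := ℂ)).1 (by omega)
  obtain ⟨u, hu⟩ := exists_ne (0 : P)
  have hune : (u : ℂ[X]) ≠ 0 := fun h' => hu (Subtype.ext h')
  by_cases hsp : ∀ v : P, (v : ℂ[X]) ∈ Submodule.span ℂ {(u : ℂ[X])}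
  · exfalso
    have hle : P ≤ Submodule.span ℂ {(u : ℂ[X])} := fun p hp => hsp ⟨p, hp⟩
    have h2 := Submodule.finrank_mono hle
    rw [finrank_span_singleton hune] at h2
    omega
  · push_neg at hsp
    obtain ⟨v, hv⟩ := hsp
    have hvne : (v : ℂ[X]) ≠ 0 := fun h' => hv (h' ▸ Submodule.zero_mem _)
    by_cases hdeg : natDegree (v : ℂ[X]) = natDegree (u : ℂ[X])
    · set e := natDegree (u : ℂ[X]) with he
      set cu := (u : ℂ[X]).coeff e with hcu
      set cv := (v : ℂ[X]).coeff e with hcv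
      have hcune : cu ≠ 0 := by
        rw [hcu, he]
        exact fun hc => hune (leadingCoeff_eq_zero.1 hc)
      set wp := cu • (v : ℂ[X]) - cv • (u : ℂ[X]) with hwp
      have hwmem : wp ∈ P := Submodule.sub_mem _ (Submodule.smul_mem _ _ v.2)
        (Submodule.smul_mem _ _ u.2)
      have hwne : wp ≠ 0 := by
        intro h0'
        apply hv
        rw [Submodule.mem_span_singleton]
        refine ⟨cu⁻¹ * cv, ?_⟩
        have : cu • (v : ℂ[X]) = cv • (u : ℂ[X]) := by
          rwa [hwp, sub_eq_zero] at h0'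
        rw [mul_smul, ← this, ← mul_smul, inv_mul_cancel₀ hcune, one_smul]
      have hwcoeff : wp.coeff e = 0 := by
        rw [hwp]
        simp only [coeff_sub, coeff_smul, smul_eq_mul]
        rw [← hcu, ← hcv]
        ring
      have hwdeg : natDegree wp ≠ e := by
        intro hd
        apply hwne
        apply leadingCoeff_eq_zero.1
        rw [leadingCoeff, hd, hwcoeff]
      exact ⟨(u : ℂ[X]), u.2, wp, hwmem, hune, hwne, fun hh => hwdeg (hh.symm.trans he.symm)⟩
    · exact ⟨(u : ℂ[X]), u.2, (v : ℂ[X]), v.2, hune, hvne, fun hh => hdeg hh.symm⟩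

lemma natDegree_le_pred {p : ℂ[X]} {c : ℕ} (h : natDegree p ≤ c + 1) (h0 : coeff p (c + 1) = 0) :
    natDegree p ≤ c := by
  rcases Nat.lt_or_ge (natDegree p) (c + 1) with h1 | h1
  · omega
  · have h2 : natDegree p = c + 1 := by omega
    have : leadingCoeff p = 0 := by rw [leadingCoeff, h2]; exact h0
    have hp0 : p = 0 := leadingCoeff_eq_zero.1 this
    rw [hp0, natDegree_zero]
    omega

end BetheAux

open BetheAux Polynomial Finset

/-- **Proposition 6(b).** For distinct complex `a₁, …, a_n`, any solution of
`x_k² = Σ_{j≠k} (x_j - x_k)/(a_j - a_k)` satisfies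
`(n+1)² - 4 Σ_k x_k a_k = s²` for some integer `1 ≤ s ≤ n+1` with `n + s` odd. -/
theorem bethe_system_discriminant_square
    (n : ℕ) (a : Fin n → ℂ) (ha : Function.Injective a) (x : Fin n → ℂ)
    (hx : ∀ k, (x k) ^ 2 = ∑ j ∈ Finset.univ.erase k, (x j - x k) / (a j - a k)) :
    ∃ s : ℕ, 1 ≤ s ∧ s ≤ n + 1 ∧ Odd (n + s) ∧
      ((n : ℂ) + 1) ^ 2 - 4 * ∑ k, x k * a k = (s : ℂ) ^ 2 := by
  classical
  rcases Nat.lt_or_ge n 2 with hn2 | hn2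
  · interval_cases n
    · refine ⟨1, le_refl 1, by omega, ⟨0, by ring⟩, ?_⟩
      simp
    · have h0 := hx 0
      have hemp : (Finset.univ.erase (0 : Fin 1)) = ∅ := by decide
      rw [hemp, Finset.sum_empty] at h0
      have hx0 : x 0 = 0 := by
        have := pow_eq_zero_iff (n := 2) (by norm_num) |>.1 h0
        exact this
      refine ⟨2, by norm_num, by norm_num, ⟨1, by ring⟩, ?_⟩
      rw [Fin.sum_univ_one, hx0]
      norm_num
  · -- main case `2 ≤ n`
    -- Phase 1 : find one nonzero polynomial solution
    have himg1 : ∀ f : ℂ[X], natDegree f ≤ (n + 1) - 1 → natDegree (Lop a x f) < 2 * n := by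
      intro f hf
      have h := natDegree_L_le a x (m := n) (c := n - 1) (N := 2 * n - 1)
        (by simpa using hf) (natDegree_Bpoly_le a x) (by omega) (by omega) (by omega)
      omega
    obtain ⟨P₁, hP₁, hFD₁, hfr₁⟩ := kernel_submodule a x ha hx (by omega) (by omega) himg1
    haveI := hFD₁
    have hnt₁ : Nontrivial P₁ := (Module.finrank_pos_iff (R := ℂ)).1 (by omega)
    obtain ⟨u, hu⟩ := exists_ne (0 : P₁)
    have hf₁ne : (u : ℂ[X]) ≠ 0 := fun h' => hu (Subtype.ext h')
    have hLf₁ : Lop a x (u : ℂ[X]) = 0 := hP₁ _ u.2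
    have hBtop : coeff (Bpoly a x) (n - 1) = 0 := by
      have hc := coeff_L_high a x (by omega) (u : ℂ[X]) (le_refl (natDegree (u : ℂ[X])))
      rw [hLf₁, coeff_zero] at hc
      rcases mul_eq_zero.1 hc.symm with h | h
      · exact h
      · exact absurd (leadingCoeff_eq_zero.1 h) hf₁ne
    have hB2 : natDegree (Bpoly a x) ≤ n - 2 := by
      have hb1 := natDegree_Bpoly_le a x
      have heq : n - 2 + 1 = n - 1 := by omega
      apply natDegree_le_pred (c := n - 2)
      · rw [heq]; exact hb1
      · rw [heq]; exact hBtop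
    -- Phase 2 : two solutions of distinct degrees
    have himg2 : ∀ f : ℂ[X], natDegree f ≤ (n + 2) - 1 → natDegree (Lop a x f) < 2 * n := by
      intro f hf
      have h := natDegree_L_le a x (m := n + 1) (c := n - 2) (N := 2 * n - 1)
        (by simpa using hf) hB2 (by omega) (by omega) (by omega)
      omega
    obtain ⟨P₂, hP₂, hFD₂, hfr₂⟩ := kernel_submodule a x ha hx (by omega) (by omega) himg2
    haveI := hFD₂
    obtain ⟨f, hfP, g, hgP, hfne, hgne, hdne⟩ := exists_two_degrees P₂ (by omega)
    have hLf := hP₂ f hfP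
    have hLg := hP₂ g hgP
    have hrel : ∀ p : ℂ[X], p ≠ 0 → Lop a x p = 0 →
        ((natDegree p : ℂ) * ((natDegree p : ℂ) - 1) - (n : ℂ) * (natDegree p : ℂ)
          + coeff (Bpoly a x) (n - 2)) = 0 := by
      intro p hp hLp
      have hc := coeff_L_second a x hn2 p (le_refl (natDegree p)) hB2
      rw [hLp, coeff_zero] at hc
      rcases mul_eq_zero.1 hc.symm with h | h
      · exact h
      · exact absurd (leadingCoeff_eq_zero.1 h) hp
    have hxsum : ∑ k, x k = 0 := by rw [← coeffB_top a x, hBtop]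
    have hT : ∑ k, x k * a k = coeff (Bpoly a x) (n - 2) := by
      rw [coeffB_next a x hn2, hxsum, mul_zero, sub_zero]
    have hdC := hrel f hfne hLf
    have heC := hrel g hgne hLg
    set d := natDegree f with hd
    set e := natDegree g with he
    have hdcast : (d : ℂ) ≠ (e : ℂ) := fun hh => hdne (by exact_mod_cast hh)
    have hsumC : (d : ℂ) + (e : ℂ) = (n : ℂ) + 1 := by
      have hcomb : ((d : ℂ) - e) * ((d : ℂ) + e - 1 - n) = 0 := by
        linear_combination hdC - heC
      rcases mul_eq_zero.1 hcomb with h | h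
      · exact absurd (sub_eq_zero.1 h) hdcast
      · linear_combination h
    have hsumN : d + e = n + 1 := by
      have : ((d + e : ℕ) : ℂ) = ((n + 1 : ℕ) : ℂ) := by push_cast; exact hsumC
      exact_mod_cast this
    have main : ∀ d' e' : ℕ, d' < e' → d' + e' = n + 1 →
        ((d' : ℂ) * ((d' : ℂ) - 1) - (n : ℂ) * (d' : ℂ) + coeff (Bpoly a x) (n - 2)) = 0 →
        ∃ s : ℕ, 1 ≤ s ∧ s ≤ n + 1 ∧ Odd (n + s) ∧
          ((n : ℂ) + 1) ^ 2 - 4 * ∑ k, x k * a k = (s : ℂ) ^ 2 := by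
      intro d' e' hlt hsN hdd
      refine ⟨e' - d', by omega, by omega, ⟨e' - 1, by omega⟩, ?_⟩
      rw [hT]
      have hcast : ((e' - d' : ℕ) : ℂ) = (e' : ℂ) - (d' : ℂ) := by
        push_cast [Nat.cast_sub hlt.le]; ring
      rw [hcast]
      have hsC : (d' : ℂ) + (e' : ℂ) = (n : ℂ) + 1 := by
        have : ((d' + e' : ℕ) : ℂ) = ((n + 1 : ℕ) : ℂ) := by rw [hsN]
        push_cast at this
        exact this
      have hb : coeff (Bpoly a x) (n - 2) = (d' : ℂ) * (e' : ℂ) := by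
        linear_combination hdd - (d' : ℂ) * hsC
      rw [hb]
      linear_combination (-(n : ℂ) - 1 - d' - e') * hsC
    rcases lt_or_gt_of_ne (show d ≠ e from fun hh => hdne hh) with hlt | hlt
    · exact main d e hlt hsumN hdC
    · exact main e d hlt (by omega) heC
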